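/- In the free L-algebra L(X) on a well-ordered set X, every element of the basis N of normal L-words, under the weight-lexicographic order (comparing first total degree, then the operation with ≺ > ≻, then arguments lexicographically), forms a monomial order: for any normal L-words u, v with u > v and any ⋆-L-word w, one has [w|_u] > [w|_v], where [·] denotes the normal form. -/
import Mathlib


/-- `L`-words over an alphabet `X`: letters and the two binary operations
`pr` (≺) and `sc` (≻). -/
inductive LWord (X : Type) where
  | ltr : X → LWord X
  | pr : LWord X → LWord X → LWord X
  | sc : LWord X → LWord X → LWord X
deriving DecidableEq

/-- Number of letter occurrences in an `L`-word. -/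
def LWord.deg {X : Type} : LWord X → ℕ
  | .ltr _ => 1
  | .pr u v => u.deg + v.deg
  | .sc u v => u.deg + v.deg

/-- Normal `L`-words: letters; `v ≻ w` with `v, w` normal; and `v ≺ w` with
`v, w` normal and `v` not of the form `v₁ ≻ v₂`. -/
inductive IsNormalL {X : Type} : LWord X → Prop
  | ltr (x : X) : IsNormalL (.ltr x)
  | sc {v w : LWord X} : IsNormalL v → IsNormalL w → IsNormalL (.sc v w)
  | pr {v w : LWord X} : IsNormalL v → IsNormalL w →
      (∀ v1 v2 : LWord X, v ≠ .sc v1 v2) → IsNormalL (.pr v w)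

/-- Normalized `≺`-product: `[u ≺ v] = u ≺ v` unless `u = u₁ ≻ u₂`, in which
case `[u ≺ v] = u₁ ≻ [u₂ ≺ v]`. -/
def nprL {X : Type} : LWord X → LWord X → LWord X
  | .sc u1 u2, v => .sc u1 (nprL u2 v)
  | .ltr x, v => .pr (.ltr x) v
  | .pr u1 u2, v => .pr (.pr u1 u2) v

/-- The normal form of an `L`-word under the rewriting
`(x ≻ y) ≺ z → x ≻ (y ≺ z)`. -/
def nfL {X : Type} : LWord X → LWord X
  | .ltr x => .ltr x
  | .sc u v => .sc (nfL u) (nfL v)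
  | .pr u v => nprL (nfL u) (nfL v)

/-- The weight-lexicographic order on `L`-words from the paper: compare first
the degree `|u|`, then the operation (with `≺ = δ₂ > δ₁ = ≻`), then the
arguments lexicographically; letters of equal degree are compared in `X`. -/
def lltL {X : Type} [LinearOrder X] : LWord X → LWord X → Prop
  | .ltr x, .ltr y => x < y
  | .ltr _, .pr v1 v2 => 1 < (LWord.pr v1 v2).deg
  | .ltr _, .sc v1 v2 => 1 < (LWord.sc v1 v2).deg
  | .pr u1 u2, .ltr _ => (LWord.pr u1 u2).deg < 1
  | .sc u1 u2, .ltr _ => (LWord.sc u1 u2).deg < 1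
  | .pr u1 u2, .pr v1 v2 =>
      (LWord.pr u1 u2).deg < (LWord.pr v1 v2).deg ∨
        ((LWord.pr u1 u2).deg = (LWord.pr v1 v2).deg ∧
          (lltL u1 v1 ∨ (u1 = v1 ∧ lltL u2 v2)))
  | .pr u1 u2, .sc v1 v2 => (LWord.pr u1 u2).deg < (LWord.sc v1 v2).deg
  | .sc u1 u2, .pr v1 v2 =>
      (LWord.sc u1 u2).deg < (LWord.pr v1 v2).deg ∨
        (LWord.sc u1 u2).deg = (LWord.pr v1 v2).deg
  | .sc u1 u2, .sc v1 v2 =>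
      (LWord.sc u1 u2).deg < (LWord.sc v1 v2).deg ∨
        ((LWord.sc u1 u2).deg = (LWord.sc v1 v2).deg ∧
          (lltL u1 v1 ∨ (u1 = v1 ∧ lltL u2 v2)))

/-- Number of occurrences of the star `⋆` (the letter `none`). -/
def countStar {X : Type} : LWord (Option X) → ℕ
  | .ltr none => 1
  | .ltr (some _) => 0
  | .pr u v => countStar u + countStar v
  | .sc u v => countStar u + countStar v

/-- Substitute an `L`-word `s` for the star in a `⋆`-`L`-word. -/
def substStar {X : Type} : LWord (Option X) → LWord X → LWord X
  | .ltr none, s => s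
  | .ltr (some x), _ => .ltr x
  | .pr u v, s => .pr (substStar u s) (substStar v s)
  | .sc u v, s => .sc (substStar u s) (substStar v s)


lemma LWord.deg_pos {X : Type} : ∀ a : LWord X, 1 ≤ a.deg
  | .ltr _ => le_refl 1
  | .pr u v => by have := deg_pos u; simp [LWord.deg]; omega
  | .sc u v => by have := deg_pos u; simp [LWord.deg]; omega

lemma deg_nprL {X : Type} : ∀ a b : LWord X, (nprL a b).deg = a.deg + b.deg
  | .ltr x, b => by simp [nprL, LWord.deg]
  | .pr u1 u2, b => by simp [nprL, LWord.deg]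
  | .sc u1 u2, b => by simp [nprL, LWord.deg, deg_nprL u2 b]; omega

lemma lltL_deg_le {X : Type} [LinearOrder X] :
    ∀ a b : LWord X, lltL a b → a.deg ≤ b.deg := by
  intro a b h
  cases a <;> cases b <;>
    simp only [lltL, LWord.deg] at h ⊢ <;>
    omega

lemma nfL_of_normal {X : Type} {a : LWord X} (h : IsNormalL a) : nfL a = a := by
  induction h with
  | ltr x => rfl
  | sc hv hw ihv ihw => simp [nfL, ihv, ihw]
  | pr hv hw hns ihv ihw =>
    rename_i v w
    simp only [nfL, ihv, ihw]
    cases v with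
    | ltr x => rfl
    | pr a b => rfl
    | sc a b => exact absurd rfl (hns a b)

lemma lltL_nprL_right {X : Type} [LinearOrder X] :
    ∀ (a b b' : LWord X), lltL b b' → lltL (nprL a b) (nprL a b') := by
  intro a
  induction a with
  | ltr x =>
    intro b b' h
    have hd := lltL_deg_le b b' h
    rcases lt_or_eq_of_le hd with hlt | heq
    · exact Or.inl (by simp [LWord.deg]; omega)
    · exact Or.inr ⟨by simp [LWord.deg]; omega, Or.inr ⟨rfl, h⟩⟩
  | pr a1 a2 ih1 ih2 =>
    intro b b' h
    have hd := lltL_deg_le b b' h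
    rcases lt_or_eq_of_le hd with hlt | heq
    · exact Or.inl (by simp [LWord.deg]; omega)
    · exact Or.inr ⟨by simp [LWord.deg]; omega, Or.inr ⟨rfl, h⟩⟩
  | sc a1 a2 ih1 ih2 =>
    intro b b' h
    have hd := lltL_deg_le b b' h
    rcases lt_or_eq_of_le hd with hlt | heq
    · exact Or.inl (by simp [LWord.deg, deg_nprL]; omega)
    · exact Or.inr ⟨by simp [LWord.deg, deg_nprL]; omega,
        Or.inr ⟨rfl, ih2 b b' h⟩⟩

lemma lltL_nprL_left {X : Type} [LinearOrder X] :
    ∀ (a a' b : LWord X), lltL a a' → lltL (nprL a b) (nprL a' b) := by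
  intro a
  induction a with
  | ltr x =>
    intro a' b h
    cases a' with
    | ltr y => exact Or.inr ⟨rfl, Or.inl h⟩
    | pr v1 v2 =>
      simp only [lltL, LWord.deg] at h
      exact Or.inl (by simp [LWord.deg]; omega)
    | sc v1 v2 =>
      simp only [lltL, LWord.deg] at h
      simp only [nprL, lltL, LWord.deg, deg_nprL]
      omega
  | pr a1 a2 ih1 ih2 =>
    intro a' b h
    cases a' with
    | ltr y =>
      simp only [lltL, LWord.deg] at h
      have := LWord.deg_pos a1; omega
    | pr v1 v2 =>
      rcases h with hlt | ⟨heq, hlex⟩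
      · exact Or.inl (by simp only [LWord.deg] at hlt ⊢; omega)
      · exact Or.inr ⟨by simp only [LWord.deg] at heq ⊢; omega,
          Or.inl (Or.inr ⟨heq, hlex⟩)⟩
    | sc v1 v2 =>
      simp only [lltL, LWord.deg] at h
      simp only [nprL, lltL, LWord.deg, deg_nprL]
      omega
  | sc a1 a2 ih1 ih2 =>
    intro a' b h
    cases a' with
    | ltr y =>
      simp only [lltL, LWord.deg] at h
      have := LWord.deg_pos a1; omega
    | pr v1 v2 =>
      simp only [lltL, LWord.deg] at h
      simp only [nprL, lltL, LWord.deg, deg_nprL]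
      omega
    | sc v1 v2 =>
      rcases h with hlt | ⟨heq, hlex⟩
      · exact Or.inl (by
          simp only [nprL, LWord.deg, deg_nprL]
          simp only [LWord.deg] at hlt; omega)
      · refine Or.inr ⟨by
          simp only [nprL, LWord.deg, deg_nprL]
          simp only [LWord.deg] at heq; omega, ?_⟩
        rcases hlex with h1 | ⟨rfl, h2⟩
        · exact Or.inl h1
        · exact Or.inr ⟨rfl, ih2 v2 b h2⟩

lemma lltL_sc_left {X : Type} [LinearOrder X] (a a' b : LWord X)
    (h : lltL a a') : lltL (LWord.sc a b) (LWord.sc a' b) := by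
  have hd := lltL_deg_le a a' h
  rcases lt_or_eq_of_le hd with hlt | heq
  · exact Or.inl (by simp [LWord.deg]; omega)
  · exact Or.inr ⟨by simp [LWord.deg]; omega, Or.inl h⟩

lemma lltL_sc_right {X : Type} [LinearOrder X] (a b b' : LWord X)
    (h : lltL b b') : lltL (LWord.sc a b) (LWord.sc a b') := by
  have hd := lltL_deg_le b b' h
  rcases lt_or_eq_of_le hd with hlt | heq
  · exact Or.inl (by simp [LWord.deg]; omega)
  · exact Or.inr ⟨by simp [LWord.deg]; omega, Or.inr ⟨rfl, h⟩⟩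

lemma substStar_const {X : Type} :
    ∀ (a : LWord (Option X)), countStar a = 0 →
      ∀ s t : LWord X, substStar a s = substStar a t := by
  intro a
  induction a with
  | ltr o =>
    cases o with
    | none => intro h; simp [countStar] at h
    | some x => intro _ s t; rfl
  | pr u v ihu ihv =>
    intro h s t
    simp only [countStar] at h
    simp only [substStar, ihu (by omega) s t, ihv (by omega) s t]
  | sc u v ihu ihv =>
    intro h s t
    simp only [countStar] at h
    simp only [substStar, ihu (by omega) s t, ihv (by omega) s t]

/-- The weight-lexicographic order on normal `L`-words is monomial: if `u > v`
(i.e. `lltL v u`) then for every `⋆`-`L`-word `w` (one occurrence of `⋆`),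
`[w|_u] > [w|_v]`. -/
theorem lword_order_is_monomial (X : Type) [LinearOrder X] [WellFoundedLT X]
    (u v : LWord X) (hu : IsNormalL u) (hv : IsNormalL v) (hlt : lltL v u)
    (w : LWord (Option X)) (hw : countStar w = 1) :
    lltL (nfL (substStar w v)) (nfL (substStar w u)) := by
  induction w with
  | ltr o =>
    cases o with
    | none =>
      simp only [substStar, nfL_of_normal hu, nfL_of_normal hv]
      exact hlt
    | some x => simp [countStar] at hw
  | pr w1 w2 ih1 ih2 =>
    simp only [countStar] at hw
    simp only [substStar, nfL]
    rcases Nat.eq_zero_or_pos (countStar w1) with h1 | h1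
    · have h2 : countStar w2 = 1 := by omega
      rw [substStar_const w1 h1 v u]
      exact lltL_nprL_right _ _ _ (ih2 h2)
    · have h1' : countStar w1 = 1 := by omega
      have h2 : countStar w2 = 0 := by omega
      rw [substStar_const w2 h2 v u]
      exact lltL_nprL_left _ _ _ (ih1 h1')
  | sc w1 w2 ih1 ih2 =>
    simp only [countStar] at hw
    simp only [substStar, nfL]
    rcases Nat.eq_zero_or_pos (countStar w1) with h1 | h1
    · have h2 : countStar w2 = 1 := by omega
      rw [substStar_const w1 h1 v u]
      exact lltL_sc_right _ _ _ (ih2 h2)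
    · have h1' : countStar w1 = 1 := by omega
      have h2 : countStar w2 = 0 := by omega
      rw [substStar_const w2 h2 v u]
      exact lltL_sc_left _ _ _ (ih1 h1')
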